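/- Heat-kernel intertwining of the Hermite-type functions (Lemma 3.3 of the paper): Let p(x, y; t) = exp(−(x−y)²/(2t))/√(2πt) be the Gaussian heat kernel and γ(t) = √((1−t)/(1+t)). Then for every natural number k and all real t₁, t₂, y with −1 < t₁ < t₂ < 1: ∫_ℝ γ(t₁)^k · He_k(√2·x/√(1−t₁²)) · p(0, x; 1+t₁) · p(x, y; t₂−t₁) dx = γ(t₂)^k · He_k(√2·y/√(1−t₂²)) · p(0, y; 1+t₂). -/

import Mathlib

open MeasureTheory Real

/-- The Gaussian (Brownian) transition kernel `p(x, y; t) = exp(−(x−y)²/(2t))/√(2πt)`. -/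
noncomputable def heatKernel (x y t : ℝ) : ℝ :=
  Real.exp (-(x - y) ^ 2 / (2 * t)) / Real.sqrt (2 * π * t)

open Polynomial Filter
private lemma eq_of_sq {p q : ℝ} (hp : 0 ≤ p) (hq : 0 ≤ q) (h : p^2 = q^2) : p = q := by
  rw [← Real.sqrt_sq hp, ← Real.sqrt_sq hq, h]

private lemma intg0 {v : ℝ} (hv : 0 < v) (q : ℝ[X]) :
    Integrable fun x : ℝ => q.eval x * Real.exp (-x^2/(2*v)) := by
  have hb : (0:ℝ) < 1/(2*v) := by positivity
  have key : ∀ n : ℕ, Integrable fun x : ℝ => x^n * Real.exp (-x^2/(2*v)) := by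
    intro n
    have h := integrable_rpow_mul_exp_neg_mul_sq hb
      (s := (n:ℝ)) (lt_of_lt_of_le neg_one_lt_zero n.cast_nonneg)
    simp only [Real.rpow_natCast] at h
    refine h.congr (Filter.Eventually.of_forall fun x => ?_)
    ring_nf
  induction q using Polynomial.induction_on' with
  | add p q hp hq => exact (hp.add hq).congr (Eventually.of_forall fun x => by simp [add_mul])
  | monomial n c =>
      simpa [Polynomial.eval_monomial, mul_assoc] using (key n).const_mul c

private lemma intg {m v : ℝ} (hv : 0 < v) (p : ℝ[X]) :
    Integrable fun x : ℝ => p.eval x * Real.exp (-(x-m)^2/(2*v)) := by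
  have h := (intg0 hv (p.comp (X + C m))).comp_sub_right m
  refine h.congr (Filter.Eventually.of_forall fun x => ?_)
  simp [Polynomial.eval_comp]

private lemma tend_top0 {v : ℝ} (hv : 0 < v) (q : ℝ[X]) :
    Tendsto (fun x : ℝ => q.eval x * Real.exp (-x^2/(2*v))) atTop (nhds 0) := by
  have h1 := q.tendsto_div_exp_atTop
  apply squeeze_zero_norm' (a := fun x => ‖q.eval x / Real.exp x‖)
  · filter_upwards [eventually_ge_atTop (max (2*v) 0)] with x hx
    have hx1 : 2*v ≤ x := le_trans (le_max_left _ _) hx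
    have hx0 : 0 ≤ x := le_trans (le_max_right _ _) hx
    have hle : Real.exp (-x^2/(2*v)) ≤ Real.exp (-x) := by
      apply Real.exp_le_exp.mpr
      rw [div_le_iff₀ (by positivity)]
      nlinarith
    calc ‖q.eval x * Real.exp (-x^2/(2*v))‖
        = |q.eval x| * Real.exp (-x^2/(2*v)) := by
          rw [norm_mul, Real.norm_eq_abs, Real.norm_eq_abs, abs_of_pos (Real.exp_pos _)]
      _ ≤ |q.eval x| * Real.exp (-x) := by
          exact mul_le_mul_of_nonneg_left hle (abs_nonneg _)
      _ = ‖q.eval x / Real.exp x‖ := by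
          rw [Real.exp_neg, norm_div, Real.norm_eq_abs, Real.norm_eq_abs,
            abs_of_pos (Real.exp_pos _), div_eq_mul_inv]
  · simpa using h1.norm

private lemma tend_top {m v : ℝ} (hv : 0 < v) (p : ℝ[X]) :
    Tendsto (fun x : ℝ => p.eval x * Real.exp (-(x-m)^2/(2*v))) atTop (nhds 0) := by
  have h := (tend_top0 hv (p.comp (X + C m))).comp
    (tendsto_atTop_add_const_right atTop (-m) tendsto_id)
  refine h.congr fun x => ?_
  simp [Polynomial.eval_comp, Function.comp, sub_eq_add_neg]

private lemma tend_bot {m v : ℝ} (hv : 0 < v) (p : ℝ[X]) :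
    Tendsto (fun x : ℝ => p.eval x * Real.exp (-(x-m)^2/(2*v))) atBot (nhds 0) := by
  have h := (tend_top (m := -m) hv (p.comp (-X))).comp tendsto_neg_atBot_atTop
  refine h.congr fun x => ?_
  simp only [Function.comp, Polynomial.eval_comp, Polynomial.eval_neg, Polynomial.eval_X]
  rw [neg_neg]
  congr 2
  ring

private lemma integral_deriv_zero {F F' : ℝ → ℝ} (hd : ∀ x, HasDerivAt F (F' x) x)
    (hi : Integrable F') (ht : Tendsto F atTop (nhds 0)) (hb : Tendsto F atBot (nhds 0)) :
    ∫ x, F' x = 0 := by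
  have h1 := integral_Iic_of_hasDerivAt_of_tendsto' (a := 0) (fun x _ => hd x)
    hi.integrableOn hb
  have h2 := integral_Ioi_of_hasDerivAt_of_tendsto' (a := 0) (fun x _ => hd x)
    hi.integrableOn ht
  rw [← intervalIntegral.integral_Iic_add_Ioi hi.integrableOn hi.integrableOn, h1, h2]
  ring

private lemma hermite_deriv : ∀ n : ℕ,
    Polynomial.derivative (Polynomial.hermite (n+1)) = (n+1 : ℕ) • Polynomial.hermite n
  | 0 => by simp [Polynomial.hermite_one, Polynomial.hermite_zero]
  | (n+1) => by
      rw [Polynomial.hermite_succ (n+1), derivative_sub, derivative_mul, derivative_X, one_mul,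
        hermite_deriv n, Polynomial.derivative_smul, succ_nsmul, Polynomial.hermite_succ n]
      rw [smul_sub]
      ring_nf

private lemma aeval_affine (a b x : ℝ) (q : ℤ[X]) :
    ((q.map (algebraMap ℤ ℝ)).comp (C a + C b * X)).eval x = Polynomial.aeval (a + b*x) q := by
  rw [Polynomial.eval_comp]
  simp only [Polynomial.eval_add, Polynomial.eval_mul, Polynomial.eval_C, Polynomial.eval_X]
  rw [Polynomial.eval_map, ← Polynomial.aeval_def]

private lemma hasDeriv_F (q : ℤ[X]) (a b m v : ℝ) (hv : 0 < v) (x : ℝ) :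
    HasDerivAt (fun x => (Polynomial.aeval (a + b*x) q : ℝ) * Real.exp (-(x-m)^2/(2*v)))
      (b * (Polynomial.aeval (a+b*x) (derivative q) : ℝ) * Real.exp (-(x-m)^2/(2*v))
        - (Polynomial.aeval (a+b*x) q : ℝ) * ((x-m)/v) * Real.exp (-(x-m)^2/(2*v))) x := by
  have hq : HasDerivAt (fun x : ℝ => (Polynomial.aeval (a + b*x) q : ℝ))
      (b * Polynomial.aeval (a+b*x) (derivative q)) x := by
    have h1 : HasDerivAt (fun x : ℝ => a + b*x) b x := by
      simpa using ((hasDerivAt_id x).const_mul b).const_add a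
    have h2 := Polynomial.hasDerivAt_aeval (q := q) (a + b*x)
    exact (h2.comp x h1).congr_deriv (mul_comm _ _)
  have hw : HasDerivAt (fun x : ℝ => Real.exp (-(x-m)^2/(2*v)))
      (-((x-m)/v) * Real.exp (-(x-m)^2/(2*v))) x := by
    have hu : HasDerivAt (fun x : ℝ => -(x-m)^2/(2*v)) (-((x-m)/v)) x := by
      have h3 : HasDerivAt (fun x : ℝ => (x-m)^2) (2*(x-m)) x := by
        exact (((hasDerivAt_id x).sub_const m).pow 2).congr_deriv (by simp)
      have h4 := (h3.neg).div_const (2*v)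
      exact h4.congr_deriv (by ring)
    simpa [mul_comm] using hu.exp
  have := hq.mul hw
  exact this.congr_deriv (by ring)

private lemma hermite_gauss (n : ℕ) (a b m v : ℝ) (hv : 0 < v) (hbv : b^2*v < 1) :
    ∫ x : ℝ, (Polynomial.aeval (a + b*x) (Polynomial.hermite n) : ℝ) * Real.exp (-(x-m)^2/(2*v))
    = Real.sqrt (2*π*v) * (Real.sqrt (1 - b^2*v) ^ n *
        Polynomial.aeval ((a + b*m)/Real.sqrt (1 - b^2*v)) (Polynomial.hermite n)) := by
  have hv' : v ≠ 0 := hv.ne'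
  set r : ℝ := Real.sqrt (1 - b^2*v) with hrdef
  have hr0 : 0 < r := Real.sqrt_pos.mpr (by linarith)
  have hr2 : r^2 = 1 - b^2*v := Real.sq_sqrt (by linarith)
  set s : ℝ := (a + b*m)/r with hsdef
  have hrs : r * s = a + b*m := mul_div_cancel₀ _ hr0.ne'
  set S : ℝ := Real.sqrt (2*π*v) with hSdef
  set w : ℝ → ℝ := fun x => Real.exp (-(x-m)^2/(2*v)) with hwdef
  set J : ℕ → ℝ := fun j => ∫ x : ℝ, (Polynomial.aeval (a + b*x) (Polynomial.hermite j) : ℝ) * w x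
    with hJdef
  set D : ℕ → ℝ := fun j =>
    ∫ x : ℝ, (Polynomial.aeval (a + b*x) (derivative (Polynomial.hermite j)) : ℝ) * w x with hDdef
  -- integrability
  have hJint : ∀ j : ℕ, Integrable fun x : ℝ =>
      (Polynomial.aeval (a + b*x) (Polynomial.hermite j) : ℝ) * w x := fun j =>
    (intg (m := m) hv (((Polynomial.hermite j).map (algebraMap ℤ ℝ)).comp (C a + C b * X))).congr
      (Eventually.of_forall fun x => by simp only [hwdef, aeval_affine])
  have hDint : ∀ j : ℕ, Integrable fun x : ℝ =>
      (Polynomial.aeval (a + b*x) (derivative (Polynomial.hermite j)) : ℝ) * w x := fun j =>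
    (intg (m := m) hv (((derivative (Polynomial.hermite j)).map (algebraMap ℤ ℝ)).comp
      (C a + C b * X))).congr (Eventually.of_forall fun x => by simp only [hwdef, aeval_affine])
  have hXJint : ∀ j : ℕ, Integrable fun x : ℝ =>
      (x - m) * ((Polynomial.aeval (a + b*x) (Polynomial.hermite j) : ℝ) * w x) := fun j =>
    (intg (m := m) hv ((X - C m) * (((Polynomial.hermite j).map (algebraMap ℤ ℝ)).comp
      (C a + C b * X)))).congr (Eventually.of_forall fun x => by
        simp only [hwdef, Polynomial.eval_mul, Polynomial.eval_sub, Polynomial.eval_X,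
          Polynomial.eval_C, aeval_affine]
        ring)
  -- integration by parts identity
  have hkey : ∀ j : ℕ,
      ∫ x : ℝ, (x - m) * ((Polynomial.aeval (a + b*x) (Polynomial.hermite j) : ℝ) * w x)
        = v * b * D j := by
    intro j
    have hd := fun x => hasDeriv_F (Polynomial.hermite j) a b m v hv x
    have hg1 : Integrable fun x : ℝ =>
        b * (Polynomial.aeval (a+b*x) (derivative (Polynomial.hermite j)) : ℝ) * w x :=
      ((hDint j).const_mul b).congr (Eventually.of_forall fun x => by ring)
    have hg2 : Integrable fun x : ℝ =>
        (Polynomial.aeval (a+b*x) (Polynomial.hermite j) : ℝ) * ((x-m)/v) * w x :=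
      ((hXJint j).const_mul (1/v)).congr (Eventually.of_forall fun x => by field_simp)
    have hi : Integrable fun x : ℝ =>
        b * (Polynomial.aeval (a+b*x) (derivative (Polynomial.hermite j)) : ℝ) * w x
          - (Polynomial.aeval (a+b*x) (Polynomial.hermite j) : ℝ) * ((x-m)/v) * w x :=
      hg1.sub hg2
    have htop : Tendsto (fun x : ℝ =>
        (Polynomial.aeval (a + b*x) (Polynomial.hermite j) : ℝ) * w x) atTop (nhds 0) :=
      (tend_top (m := m) hv
        (((Polynomial.hermite j).map (algebraMap ℤ ℝ)).comp (C a + C b * X))).congr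
        fun x => by simp only [hwdef, aeval_affine]
    have hbot : Tendsto (fun x : ℝ =>
        (Polynomial.aeval (a + b*x) (Polynomial.hermite j) : ℝ) * w x) atBot (nhds 0) :=
      (tend_bot (m := m) hv
        (((Polynomial.hermite j).map (algebraMap ℤ ℝ)).comp (C a + C b * X))).congr
        fun x => by simp only [hwdef, aeval_affine]
    have h0 := integral_deriv_zero hd hi htop hbot
    rw [integral_sub hg1 hg2] at h0
    have e1 : ∫ x : ℝ, b * (Polynomial.aeval (a+b*x) (derivative (Polynomial.hermite j)) : ℝ)
        * w x = b * D j := by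
      simp only [hDdef]
      rw [← integral_const_mul]
      congr 1
      ext x
      ring
    have e2 : ∫ x : ℝ, (Polynomial.aeval (a+b*x) (Polynomial.hermite j) : ℝ) * ((x-m)/v) * w x
        = (1/v) * ∫ x : ℝ, (x - m) *
            ((Polynomial.aeval (a + b*x) (Polynomial.hermite j) : ℝ) * w x) := by
      rw [← integral_const_mul]
      congr 1
      ext x
      field_simp
    rw [e1, e2] at h0
    field_simp at h0
    simp only [mul_assoc] at h0
    first
    | linear_combination h0
    | linear_combination -h0
  -- the recurrence
  have hrec : ∀ j : ℕ, J (j+1) = (a + b*m) * J j + (b^2*v - 1) * D j := by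
    intro j
    have heq : (fun x : ℝ =>
        (Polynomial.aeval (a + b*x) (Polynomial.hermite (j+1)) : ℝ) * w x)
        = fun x : ℝ => ((a + b*m) * ((Polynomial.aeval (a + b*x) (Polynomial.hermite j) : ℝ) * w x)
            + b * ((x - m) * ((Polynomial.aeval (a + b*x) (Polynomial.hermite j) : ℝ) * w x)))
            - (Polynomial.aeval (a + b*x) (derivative (Polynomial.hermite j)) : ℝ) * w x := by
      funext x
      rw [Polynomial.hermite_succ, map_sub, map_mul, Polynomial.aeval_X]
      ring
    have i1 : Integrable fun x : ℝ =>
        (a + b*m) * ((Polynomial.aeval (a + b*x) (Polynomial.hermite j) : ℝ) * w x) :=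
      (hJint j).const_mul (a + b*m)
    have i2 : Integrable fun x : ℝ =>
        b * ((x - m) * ((Polynomial.aeval (a + b*x) (Polynomial.hermite j) : ℝ) * w x)) :=
      (hXJint j).const_mul b
    have i12 : Integrable fun x : ℝ =>
        (a + b*m) * ((Polynomial.aeval (a + b*x) (Polynomial.hermite j) : ℝ) * w x)
          + b * ((x - m) * ((Polynomial.aeval (a + b*x) (Polynomial.hermite j) : ℝ) * w x)) :=
      i1.add i2
    simp only [hJdef]
    rw [heq, integral_sub i12 (hDint j), integral_add i1 i2,
      integral_const_mul, integral_const_mul, hkey j]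
    simp only [hJdef, hDdef]
    ring
  have hD0 : D 0 = 0 := by
    simp only [hDdef]
    simp [Polynomial.hermite_zero]
  have hDsucc : ∀ j : ℕ, D (j+1) = (j+1 : ℝ) * J j := by
    intro j
    simp only [hDdef, hJdef, hermite_deriv j, map_nsmul, nsmul_eq_mul, Nat.cast_add, Nat.cast_one]
    rw [← integral_const_mul]
    congr 1
    ext x
    simp only [map_add, map_mul, map_natCast, map_one]
    push_cast
    ring
  have hJ0 : J 0 = S := by
    simp only [hJdef, Polynomial.hermite_zero, map_one, one_mul]
    have h1 : ∫ x : ℝ, w x = ∫ x : ℝ, Real.exp (-x^2/(2*v)) := by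
      simp only [hwdef]
      exact integral_sub_right_eq_self (fun x => Real.exp (-x^2/(2*v))) m
    rw [h1]
    have h2 : ∀ x : ℝ, Real.exp (-x^2/(2*v)) = Real.exp (-(1/(2*v)) * x^2) := by
      intro x; congr 1; field_simp
    simp_rw [h2]
    rw [integral_gaussian, hSdef]
    congr 1
    field_simp
  have main : ∀ j : ℕ, J j = S * (r^j * Polynomial.aeval s (Polynomial.hermite j))
      ∧ J (j+1) = S * (r^(j+1) * Polynomial.aeval s (Polynomial.hermite (j+1))) := by
    intro j
    induction j with
    | zero =>
      constructor
      · simpa [Polynomial.hermite_zero] using hJ0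
      · rw [hrec 0, hD0, hJ0]
        simp only [zero_add, pow_one, Polynomial.hermite_one, Polynomial.aeval_X]
        linear_combination (-S) * hrs
    | succ j ih =>
      refine ⟨ih.2, ?_⟩
      rw [hrec (j+1), hDsucc j, ih.1, ih.2]
      have hs2 : (Polynomial.aeval s (Polynomial.hermite (j+2)) : ℝ)
          = s * Polynomial.aeval s (Polynomial.hermite (j+1))
            - (j+1 : ℝ) * Polynomial.aeval s (Polynomial.hermite j) := by
        rw [show j+2 = (j+1)+1 from rfl, Polynomial.hermite_succ, map_sub, map_mul,
          Polynomial.aeval_X, hermite_deriv j, map_nsmul, nsmul_eq_mul]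
        push_cast
        ring
      rw [hs2]
      linear_combination
        (-(S * r^(j+1) * (Polynomial.aeval s (Polynomial.hermite (j+1)) : ℝ))) * hrs
        + ((j+1 : ℝ) * S * r^j * (Polynomial.aeval s (Polynomial.hermite j) : ℝ)) * hr2
  exact (main n).1

/-- Heat-kernel intertwining of the Hermite-type functions (Lemma 3.3): with
`γ(t) = √((1−t)/(1+t))` and `He_k` the probabilists' Hermite polynomial, for
`−1 < t₁ < t₂ < 1` and all real `y`,
`∫ γ(t₁)^k · He_k(√2·x/√(1−t₁²)) · p(0,x;1+t₁) · p(x,y;t₂−t₁) dx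
  = γ(t₂)^k · He_k(√2·y/√(1−t₂²)) · p(0,y;1+t₂)`. -/
theorem hermite_heat_kernel_intertwining (k : ℕ) (t₁ t₂ y : ℝ)
    (h₁ : -1 < t₁) (h₁₂ : t₁ < t₂) (h₂ : t₂ < 1) :
    (∫ x : ℝ,
        Real.sqrt ((1 - t₁) / (1 + t₁)) ^ k *
          (Polynomial.aeval (Real.sqrt 2 * x / Real.sqrt (1 - t₁ ^ 2))
            (Polynomial.hermite k)) *
          heatKernel 0 x (1 + t₁) * heatKernel x y (t₂ - t₁)) =
      Real.sqrt ((1 - t₂) / (1 + t₂)) ^ k *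
        (Polynomial.aeval (Real.sqrt 2 * y / Real.sqrt (1 - t₂ ^ 2))
          (Polynomial.hermite k)) *
        heatKernel 0 y (1 + t₂) := by
  have hA : 0 < 1 + t₁ := by linarith
  have hB : 0 < t₂ - t₁ := by linarith
  have hC : 0 < 1 + t₂ := by linarith
  have hD1 : 0 < 1 - t₁ := by linarith
  have hD2 : 0 < 1 - t₂ := by linarith
  set v : ℝ := (1+t₁)*(t₂-t₁)/(1+t₂) with hvdef
  have hv : 0 < v := by positivity
  set m : ℝ := y*(1+t₁)/(1+t₂) with hmdef
  set b : ℝ := Real.sqrt 2 / Real.sqrt ((1-t₁)*(1+t₁)) with hbdef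
  have hb2 : b^2 = 2/((1-t₁)*(1+t₁)) := by
    rw [hbdef, div_pow, Real.sq_sqrt (by norm_num), Real.sq_sqrt (by positivity)]
  have hbv : b^2*v = 2*(t₂-t₁)/((1-t₁)*(1+t₂)) := by
    rw [hb2, hvdef]
    field_simp
  have h1bv : 1 - b^2*v = (1+t₁)*(1-t₂)/((1-t₁)*(1+t₂)) := by
    rw [hbv]
    field_simp
    ring
  have hbv1 : b^2*v < 1 := by
    rw [hbv, div_lt_one (by positivity)]
    nlinarith
  have hSpos : 0 < Real.sqrt (2*π*v) := Real.sqrt_pos.mpr (by positivity)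
  -- kernel decomposition
  have hker : ∀ x : ℝ, heatKernel 0 x (1+t₁) * heatKernel x y (t₂-t₁)
      = heatKernel 0 y (1+t₂) * (Real.exp (-(x-m)^2/(2*v)) / Real.sqrt (2*π*v)) := by
    intro x
    simp only [heatKernel]
    rw [div_mul_div_comm, div_mul_div_comm, ← Real.exp_add, ← Real.exp_add,
      ← Real.sqrt_mul (by positivity), ← Real.sqrt_mul (by positivity)]
    congr 1
    · congr 1
      rw [hmdef, hvdef]
      field_simp
      ring
    · congr 1
      rw [hvdef]
      field_simp
  -- rewrite the hermite argument
  have harg : ∀ x : ℝ, Real.sqrt 2 * x / Real.sqrt (1 - t₁ ^ 2) = 0 + b*x := by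
    intro x
    rw [zero_add, hbdef, show 1 - t₁^2 = (1-t₁)*(1+t₁) by ring]
    ring
  have step1 : (∫ x : ℝ,
        Real.sqrt ((1 - t₁) / (1 + t₁)) ^ k *
          (Polynomial.aeval (Real.sqrt 2 * x / Real.sqrt (1 - t₁ ^ 2))
            (Polynomial.hermite k)) *
          heatKernel 0 x (1 + t₁) * heatKernel x y (t₂ - t₁))
      = ∫ x : ℝ, (Real.sqrt ((1 - t₁) / (1 + t₁)) ^ k * heatKernel 0 y (1+t₂)
          / Real.sqrt (2*π*v)) *
        ((Polynomial.aeval (0 + b*x) (Polynomial.hermite k) : ℝ)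
          * Real.exp (-(x-m)^2/(2*v))) := by
    congr 1
    funext x
    rw [harg x, mul_assoc, hker x]
    ring
  rw [step1, integral_const_mul, hermite_gauss k 0 b m v hv hbv1]
  -- scalar identities
  have f1 : Real.sqrt ((1 - t₁) / (1 + t₁)) * Real.sqrt (1 - b^2*v)
      = Real.sqrt ((1 - t₂) / (1 + t₂)) := by
    rw [h1bv, ← Real.sqrt_mul (by positivity)]
    congr 1
    field_simp
  have f1k : Real.sqrt ((1 - t₁) / (1 + t₁)) ^ k * Real.sqrt (1 - b^2*v) ^ k
      = Real.sqrt ((1 - t₂) / (1 + t₂)) ^ k := by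
    rw [← mul_pow, f1]
  have hco : (Real.sqrt 2 / Real.sqrt ((1-t₁)*(1+t₁)) * ((1+t₁)/(1+t₂)))
        / Real.sqrt ((1+t₁)*(1-t₂)/((1-t₁)*(1+t₂)))
      = Real.sqrt 2 / Real.sqrt ((1+t₂)*(1-t₂)) := by
    apply eq_of_sq (by positivity) (by positivity)
    simp only [div_pow, mul_pow]
    rw [Real.sq_sqrt (by norm_num : (0:ℝ) ≤ 2),
      Real.sq_sqrt (by positivity : (0:ℝ) ≤ (1-t₁)*(1+t₁)),
      Real.sq_sqrt (by positivity : (0:ℝ) ≤ (1+t₁)*(1-t₂)/((1-t₁)*(1+t₂))),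
      Real.sq_sqrt (by positivity : (0:ℝ) ≤ (1+t₂)*(1-t₂))]
    field_simp
  have f2 : (0 + b*m)/Real.sqrt (1 - b^2*v)
      = Real.sqrt 2 * y / Real.sqrt (1 - t₂ ^ 2) := by
    rw [zero_add, h1bv, hmdef, hbdef, show 1 - t₂^2 = (1+t₂)*(1-t₂) by ring]
    linear_combination y * hco
  rw [f2]
  have hSne : Real.sqrt (2*π*v) ≠ 0 := hSpos.ne'
  have expand : Real.sqrt ((1 - t₁) / (1 + t₁)) ^ k * heatKernel 0 y (1 + t₂)
        / Real.sqrt (2*π*v) *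
      (Real.sqrt (2*π*v) * (Real.sqrt (1 - b^2*v) ^ k *
        (Polynomial.aeval (Real.sqrt 2 * y / Real.sqrt (1 - t₂ ^ 2)) (Polynomial.hermite k))))
      = (Real.sqrt ((1 - t₁) / (1 + t₁)) ^ k * Real.sqrt (1 - b^2*v) ^ k) *
          (Polynomial.aeval (Real.sqrt 2 * y / Real.sqrt (1 - t₂ ^ 2)) (Polynomial.hermite k)) *
          heatKernel 0 y (1 + t₂) * (Real.sqrt (2*π*v) / Real.sqrt (2*π*v)) := by
    ring
  rw [expand, div_self hSne, mul_one, f1k]
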